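/- arXiv:1401.4847 — 2 statements merged into one kernel-verified Lean document; each statement's English description precedes it below -/
import Mathlib

section
/- Let W ∈ C²(ℝ^m, ℝ) and u ∈ C³(ℝⁿ, ℝ^m) solve Δu = ∇W(u). Fix constants κ, μ, R > 0 and define P(x) = (1/2)|∇u(x)|² + ((κ+μ)/2)(|u(x)|² − R²). If D²W(u(x))(ξ,ξ) ≥ −μ|ξ|² for all ξ ∈ ℝ^m at every x, then ΔP(x) ≥ B(x) + κ|∇u(x)|² + (κ+μ)⟨u(x), ∇W(u(x))⟩, where B(x) = Σ_{i,j} |u_{x_i x_j}(x)|² ≥ 0. -/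
open scoped RealInnerProductSpace

section Helpers

variable {E F G : Type*} [NormedAddCommGroup E] [NormedSpace ℝ E]
  [NormedAddCommGroup F] [NormedSpace ℝ F]
  [NormedAddCommGroup G] [InnerProductSpace ℝ G]

lemma contDiff_fderiv_apply {nn : WithTop ℕ∞} {k : ℕ} {f : E → F} (hf : ContDiff ℝ nn f)
    (hk : (k : WithTop ℕ∞) + 1 ≤ nn) (v : E) : ContDiff ℝ k fun y => fderiv ℝ f y v :=
  (ContinuousLinearMap.apply ℝ F v).contDiff.comp (hf.fderiv_right hk)

lemma fderiv_fderiv_apply {f : E → F} (hf : ContDiff ℝ 2 f) (x v w : E) :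
    fderiv ℝ (fun y => fderiv ℝ f y v) x w = iteratedFDeriv ℝ 2 f x ![w, v] := by
  rw [iteratedFDeriv_two_apply]
  have hd : DifferentiableAt ℝ (fderiv ℝ f) x :=
    ((hf.fderiv_right (m := 1) (by norm_num)).differentiable (by norm_num) x)
  rw [fderiv_clm_apply hd (differentiableAt_const v)]
  simp

lemma it2_symm {f : E → F} (hf : ContDiff ℝ 2 f) (x v w : E) :
    iteratedFDeriv ℝ 2 f x ![v, w] = iteratedFDeriv ℝ 2 f x ![w, v] := by
  rw [iteratedFDeriv_two_apply, iteratedFDeriv_two_apply]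
  have h := (hf.contDiffAt (x := x)).isSymmSndFDerivAt (n := 2) (by simp [minSmoothness_of_isRCLikeNormedField])
  simpa using h v w

lemma fderiv_normsq_apply {g : E → G} (hg : Differentiable ℝ g) (y v : E) :
    fderiv ℝ (fun t => ‖g t‖ ^ 2) y v = 2 * ⟪g y, fderiv ℝ g y v⟫ := by
  have h : (fun t => ‖g t‖ ^ 2) = fun t => ⟪g t, g t⟫ :=
    funext fun t => (real_inner_self_eq_norm_sq _).symm
  rw [h, fderiv_inner_apply ℝ (hg y) (hg y), real_inner_comm]
  ring

end Helpers

section Grad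

variable {G : Type*} [NormedAddCommGroup G] [InnerProductSpace ℝ G] [CompleteSpace G]

lemma gradient_eq_comp (W : G → ℝ) :
    gradient W = ((InnerProductSpace.toDual ℝ G).symm : (G →L[ℝ] ℝ) → G) ∘ (fderiv ℝ W) := rfl

lemma contDiff_gradient {W : G → ℝ} (hW : ContDiff ℝ 2 W) : ContDiff ℝ 1 (gradient W) := by
  rw [gradient_eq_comp]
  exact ((InnerProductSpace.toDual ℝ G).symm.contDiff).comp (hW.fderiv_right (by norm_num))

lemma inner_fderiv_gradient (W : G → ℝ) (z ξ η : G) :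
    ⟪η, fderiv ℝ (gradient W) z ξ⟫ = iteratedFDeriv ℝ 2 W z ![ξ, η] := by
  rw [iteratedFDeriv_two_apply, gradient_eq_comp, LinearIsometryEquiv.comp_fderiv,
    ContinuousLinearMap.comp_apply]
  simp only [Matrix.cons_val_zero, Matrix.cons_val_one, Matrix.head_cons,
    LinearIsometryEquiv.coe_coe, LinearIsometryEquiv.coe_toContinuousLinearEquiv]
  rw [real_inner_comm]
  exact InnerProductSpace.toDual_symm_apply

end Grad

/-- The `i`-th standard basis vector of `ℝⁿ`. -/
noncomputable def en (n : ℕ) (i : Fin n) : EuclideanSpace ℝ (Fin n) :=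
  EuclideanSpace.single i (1 : ℝ)

/-- Let `W ∈ C²(ℝ^m, ℝ)` and `u ∈ C³(ℝⁿ, ℝ^m)` solve `Δu = ∇W(u)`. For
`κ, μ, R > 0` define `P(x) = (1/2)|∇u(x)|² + ((κ+μ)/2)(|u(x)|² − R²)`. If
`D²W(u(x))(ξ,ξ) ≥ −μ|ξ|²` for all `ξ`, then
`ΔP(x) ≥ B(x) + κ|∇u(x)|² + (κ+μ)⟨u(x), ∇W(u(x))⟩`, where
`B(x) = Σ_{i,j}|u_{x_i x_j}(x)|² ≥ 0`. -/
theorem P_function_inequality (n m : ℕ)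
    (W : EuclideanSpace ℝ (Fin m) → ℝ) (hW : ContDiff ℝ 2 W)
    (u : EuclideanSpace ℝ (Fin n) → EuclideanSpace ℝ (Fin m)) (hu : ContDiff ℝ 3 u)
    (hsol : ∀ x, ∑ i : Fin n, iteratedFDeriv ℝ 2 u x ![en n i, en n i] = gradient W (u x))
    (κ μ R : ℝ) (hκ : 0 < κ) (hμ : 0 < μ) (hR : 0 < R)
    (hhess : ∀ x, ∀ ξ : EuclideanSpace ℝ (Fin m),
      -μ * ‖ξ‖ ^ 2 ≤ iteratedFDeriv ℝ 2 W (u x) ![ξ, ξ]) :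
    ∀ x : EuclideanSpace ℝ (Fin n),
      ∑ i : Fin n, iteratedFDeriv ℝ 2
          (fun y => (1 / 2) * ∑ j : Fin n, ‖fderiv ℝ u y (en n j)‖ ^ 2 +
            ((κ + μ) / 2) * (‖u y‖ ^ 2 - R ^ 2)) x ![en n i, en n i] ≥
        (∑ i : Fin n, ∑ j : Fin n, ‖iteratedFDeriv ℝ 2 u x ![en n i, en n j]‖ ^ 2) +
          κ * ∑ j : Fin n, ‖fderiv ℝ u x (en n j)‖ ^ 2 +
          (κ + μ) * ⟪u x, gradient W (u x)⟫ := by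
  intro x
  -- differentiability package
  have hu2 : ContDiff ℝ 2 u := hu.of_le (by norm_num)
  have hu1d : Differentiable ℝ u := hu2.differentiable (by norm_num)
  have hf2 : ∀ j : Fin n, ContDiff ℝ 2 (fun y => fderiv ℝ u y (en n j)) :=
    fun j => contDiff_fderiv_apply hu (by norm_num) _
  have hf1d : ∀ j : Fin n, Differentiable ℝ (fun y => fderiv ℝ u y (en n j)) :=
    fun j => (hf2 j).differentiable (by norm_num)
  have hg1 : ∀ i j : Fin n,
      ContDiff ℝ 1 (fun y => fderiv ℝ (fun t => fderiv ℝ u t (en n j)) y (en n i)) :=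
    fun i j => contDiff_fderiv_apply (hf2 j) (by norm_num) _
  have hg1d : ∀ i j : Fin n,
      Differentiable ℝ (fun y => fderiv ℝ (fun t => fderiv ℝ u t (en n j)) y (en n i)) :=
    fun i j => (hg1 i j).differentiable (by norm_num)
  have hnsq : ∀ j : Fin n, Differentiable ℝ (fun t => ‖fderiv ℝ u t (en n j)‖ ^ 2) :=
    fun j => ((hf2 j).norm_sq (𝕜 := ℝ)).differentiable (by norm_num)
  have hSd : Differentiable ℝ (fun t => ∑ j : Fin n, ‖fderiv ℝ u t (en n j)‖ ^ 2) :=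
    fun y => DifferentiableAt.fun_sum (fun j _ => hnsq j y)
  have hTd : Differentiable ℝ (fun t => ‖u t‖ ^ 2 - R ^ 2) :=
    fun y => ((hu2.norm_sq (𝕜 := ℝ)).differentiable (by norm_num) y).sub_const _
  -- smoothness of P
  have hP2 : ContDiff ℝ 2 (fun y =>
      (1 / 2) * ∑ j : Fin n, ‖fderiv ℝ u y (en n j)‖ ^ 2 +
      ((κ + μ) / 2) * (‖u y‖ ^ 2 - R ^ 2)) := by
    apply ContDiff.add
    · exact contDiff_const.mul (ContDiff.sum fun j _ => (hf2 j).norm_sq (𝕜 := ℝ))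
    · exact contDiff_const.mul ((hu2.norm_sq (𝕜 := ℝ)).sub contDiff_const)
  -- first derivative of P
  have hD1 : ∀ (y v : EuclideanSpace ℝ (Fin n)),
      fderiv ℝ (fun y =>
        (1 / 2) * ∑ j : Fin n, ‖fderiv ℝ u y (en n j)‖ ^ 2 +
        ((κ + μ) / 2) * (‖u y‖ ^ 2 - R ^ 2)) y v
      = (∑ j : Fin n, ⟪fderiv ℝ u y (en n j),
            fderiv ℝ (fun t => fderiv ℝ u t (en n j)) y v⟫)
        + (κ + μ) * ⟪u y, fderiv ℝ u y v⟫ := by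
    intro y v
    have hA : DifferentiableAt ℝ
        (fun t => (1 / 2 : ℝ) * ∑ j : Fin n, ‖fderiv ℝ u t (en n j)‖ ^ 2) y :=
      (hSd y).const_mul _
    have hB : DifferentiableAt ℝ (fun t => ((κ + μ) / 2) * (‖u t‖ ^ 2 - R ^ 2)) y :=
      (hTd y).const_mul _
    rw [fderiv_fun_add hA hB, ContinuousLinearMap.add_apply,
      fderiv_const_mul (hSd y) ((1 : ℝ) / 2), fderiv_const_mul (hTd y) ((κ + μ) / 2),
      ContinuousLinearMap.smul_apply, ContinuousLinearMap.smul_apply,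
      fderiv_sub_const (R ^ 2 : ℝ),
      fderiv_fun_sum (fun j _ => hnsq j y), ContinuousLinearMap.sum_apply]
    rw [Finset.sum_congr rfl fun j (_ : j ∈ Finset.univ) =>
      fderiv_normsq_apply (hf1d j) y v]
    rw [fderiv_normsq_apply hu1d y v]
    simp only [smul_eq_mul]
    rw [Finset.mul_sum]
    congr 1
    · exact Finset.sum_congr rfl fun j _ => by ring
    · ring
  -- second derivative of P in direction (e i, e i)
  have key : ∀ i : Fin n,
      iteratedFDeriv ℝ 2 (fun y =>
        (1 / 2) * ∑ j : Fin n, ‖fderiv ℝ u y (en n j)‖ ^ 2 +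
        ((κ + μ) / 2) * (‖u y‖ ^ 2 - R ^ 2)) x ![en n i, en n i]
      = (∑ j : Fin n, (⟪fderiv ℝ u x (en n j),
            fderiv ℝ (fun y => fderiv ℝ (fun t => fderiv ℝ u t (en n j)) y (en n i)) x
              (en n i)⟫
          + ‖iteratedFDeriv ℝ 2 u x ![en n i, en n j]‖ ^ 2))
        + (κ + μ) * (⟪u x, iteratedFDeriv ℝ 2 u x ![en n i, en n i]⟫
          + ‖fderiv ℝ u x (en n i)‖ ^ 2) := by
    intro i
    rw [← fderiv_fderiv_apply hP2 x (en n i) (en n i)]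
    have hG : (fun y => fderiv ℝ (fun y =>
        (1 / 2) * ∑ j : Fin n, ‖fderiv ℝ u y (en n j)‖ ^ 2 +
        ((κ + μ) / 2) * (‖u y‖ ^ 2 - R ^ 2)) y (en n i))
        = fun y => (∑ j : Fin n, ⟪fderiv ℝ u y (en n j),
            fderiv ℝ (fun t => fderiv ℝ u t (en n j)) y (en n i)⟫)
          + (κ + μ) * ⟪u y, fderiv ℝ u y (en n i)⟫ :=
      funext fun y => hD1 y (en n i)
    rw [hG]
    have hinnerd : ∀ j : Fin n, Differentiable ℝ (fun y => ⟪fderiv ℝ u y (en n j),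
        fderiv ℝ (fun t => fderiv ℝ u t (en n j)) y (en n i)⟫) :=
      fun j => (hf1d j).inner ℝ (hg1d i j)
    have hinnerud : Differentiable ℝ (fun y => ⟪u y, fderiv ℝ u y (en n i)⟫) :=
      hu1d.inner ℝ (hf1d i)
    have hA : DifferentiableAt ℝ (fun y => ∑ j : Fin n, ⟪fderiv ℝ u y (en n j),
        fderiv ℝ (fun t => fderiv ℝ u t (en n j)) y (en n i)⟫) x :=
      DifferentiableAt.fun_sum (fun j _ => hinnerd j x)
    have hB : DifferentiableAt ℝ
        (fun y => (κ + μ) * ⟪u y, fderiv ℝ u y (en n i)⟫) x :=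
      (hinnerud x).const_mul _
    rw [fderiv_fun_add hA hB, ContinuousLinearMap.add_apply,
      fderiv_fun_sum (fun j _ => hinnerd j x), ContinuousLinearMap.sum_apply,
      fderiv_const_mul (hinnerud x) (κ + μ), ContinuousLinearMap.smul_apply,
      fderiv_inner_apply ℝ (hu1d x) (hf1d i x) (en n i)]
    rw [Finset.sum_congr rfl fun j (_ : j ∈ Finset.univ) => by
      rw [fderiv_inner_apply ℝ (hf1d j x) (hg1d i j x) (en n i)]]
    have hfe : ∀ j : Fin n, fderiv ℝ (fun t => fderiv ℝ u t (en n j)) x (en n i)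
        = iteratedFDeriv ℝ 2 u x ![en n i, en n j] :=
      fun j => fderiv_fderiv_apply hu2 x (en n j) (en n i)
    simp only [hfe, smul_eq_mul, real_inner_self_eq_norm_sq]
  -- commuting third derivatives
  have hDD : ∀ i j : Fin n,
      fderiv ℝ (fun y => fderiv ℝ (fun t => fderiv ℝ u t (en n j)) y (en n i)) x (en n i)
      = fderiv ℝ (fun y => fderiv ℝ (fun t => fderiv ℝ u t (en n i)) y (en n i)) x
          (en n j) := by
    intro i j
    have h1 : (fun y => fderiv ℝ (fun t => fderiv ℝ u t (en n j)) y (en n i))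
        = fun y => fderiv ℝ (fun t => fderiv ℝ u t (en n i)) y (en n j) := by
      funext y
      rw [fderiv_fderiv_apply hu2, fderiv_fderiv_apply hu2, it2_symm hu2]
    rw [h1, fderiv_fderiv_apply (hf2 i), it2_symm (hf2 i),
      ← fderiv_fderiv_apply (hf2 i)]
  have hsum3 : ∀ j : Fin n,
      (∑ i : Fin n, fderiv ℝ
        (fun y => fderiv ℝ (fun t => fderiv ℝ u t (en n j)) y (en n i)) x (en n i))
      = fderiv ℝ (gradient W) (u x) (fderiv ℝ u x (en n j)) := by
    intro j
    have h2 : (fun y => ∑ i : Fin n, fderiv ℝ (fun t => fderiv ℝ u t (en n i)) y (en n i))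
        = fun y => gradient W (u y) := by
      funext y
      rw [← hsol y]
      exact Finset.sum_congr rfl fun i _ => fderiv_fderiv_apply hu2 y _ _
    calc (∑ i : Fin n, fderiv ℝ
          (fun y => fderiv ℝ (fun t => fderiv ℝ u t (en n j)) y (en n i)) x (en n i))
        = ∑ i : Fin n, fderiv ℝ
            (fun y => fderiv ℝ (fun t => fderiv ℝ u t (en n i)) y (en n i)) x (en n j) :=
          Finset.sum_congr rfl fun i _ => hDD i j
      _ = fderiv ℝ (fun y => ∑ i : Fin n,
            fderiv ℝ (fun t => fderiv ℝ u t (en n i)) y (en n i)) x (en n j) := by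
          rw [fderiv_fun_sum (fun i _ => hg1d i i x), ContinuousLinearMap.sum_apply]
      _ = fderiv ℝ (fun y => gradient W (u y)) x (en n j) := by rw [h2]
      _ = fderiv ℝ (gradient W) (u x) (fderiv ℝ u x (en n j)) := by
          rw [show (fun y => gradient W (u y)) = (gradient W) ∘ u from rfl,
            fderiv_comp x ((contDiff_gradient hW).differentiable (by norm_num) (u x)) (hu1d x),
            ContinuousLinearMap.comp_apply]
  -- the Hessian bound
  have hess_bound : ∀ j : Fin n,
      -μ * ‖fderiv ℝ u x (en n j)‖ ^ 2 ≤ ⟪fderiv ℝ u x (en n j),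
        fderiv ℝ (gradient W) (u x) (fderiv ℝ u x (en n j))⟫ := by
    intro j
    rw [inner_fderiv_gradient]
    exact hhess x _
  -- assemble
  have final : (∑ i : Fin n, ((∑ j : Fin n, (⟪fderiv ℝ u x (en n j),
        fderiv ℝ (fun y => fderiv ℝ (fun t => fderiv ℝ u t (en n j)) y (en n i)) x
          (en n i)⟫
        + ‖iteratedFDeriv ℝ 2 u x ![en n i, en n j]‖ ^ 2))
      + (κ + μ) * (⟪u x, iteratedFDeriv ℝ 2 u x ![en n i, en n i]⟫
        + ‖fderiv ℝ u x (en n i)‖ ^ 2)))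
      = (∑ j : Fin n, ⟪fderiv ℝ u x (en n j),
            fderiv ℝ (gradient W) (u x) (fderiv ℝ u x (en n j))⟫)
        + (∑ i : Fin n, ∑ j : Fin n, ‖iteratedFDeriv ℝ 2 u x ![en n i, en n j]‖ ^ 2)
        + (κ + μ) * ⟪u x, gradient W (u x)⟫
        + (κ + μ) * ∑ j : Fin n, ‖fderiv ℝ u x (en n j)‖ ^ 2 := by
    have e1 : (∑ i : Fin n, ∑ j : Fin n, (⟪fderiv ℝ u x (en n j),
          fderiv ℝ (fun y => fderiv ℝ (fun t => fderiv ℝ u t (en n j)) y (en n i)) x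
            (en n i)⟫
          + ‖iteratedFDeriv ℝ 2 u x ![en n i, en n j]‖ ^ 2))
        = (∑ j : Fin n, ⟪fderiv ℝ u x (en n j),
              fderiv ℝ (gradient W) (u x) (fderiv ℝ u x (en n j))⟫)
          + ∑ i : Fin n, ∑ j : Fin n, ‖iteratedFDeriv ℝ 2 u x ![en n i, en n j]‖ ^ 2 := by
      simp only [Finset.sum_add_distrib]
      congr 1
      rw [Finset.sum_comm]
      refine Finset.sum_congr rfl fun j _ => ?_
      rw [← inner_sum, hsum3 j]
    have e2 : (∑ i : Fin n, (κ + μ) * (⟪u x, iteratedFDeriv ℝ 2 u x ![en n i, en n i]⟫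
          + ‖fderiv ℝ u x (en n i)‖ ^ 2))
        = (κ + μ) * ⟪u x, gradient W (u x)⟫
          + (κ + μ) * ∑ j : Fin n, ‖fderiv ℝ u x (en n j)‖ ^ 2 := by
      rw [← Finset.mul_sum, Finset.sum_add_distrib, ← inner_sum, hsol x, mul_add]
    rw [Finset.sum_add_distrib, e1, e2]
    ring
  have hT1 : -μ * ∑ j : Fin n, ‖fderiv ℝ u x (en n j)‖ ^ 2
      ≤ ∑ j : Fin n, ⟪fderiv ℝ u x (en n j),
          fderiv ℝ (gradient W) (u x) (fderiv ℝ u x (en n j))⟫ := by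
    calc -μ * ∑ j : Fin n, ‖fderiv ℝ u x (en n j)‖ ^ 2
        = ∑ j : Fin n, -μ * ‖fderiv ℝ u x (en n j)‖ ^ 2 := Finset.mul_sum _ _ _
      _ ≤ _ := Finset.sum_le_sum fun j _ => hess_bound j
  rw [ge_iff_le, Finset.sum_congr rfl fun i (_ : i ∈ Finset.univ) => key i, final]
  linarith [hT1]
end

section
/- Let u ∈ C³(ℝⁿ, ℝ^m) solve the Ginzburg–Landau system Δu = (|u|² − 1)u, and set Q(u) = (|u|²−1)/2, W(u) = (1/4)(|u|²−1)², P(x) = (1/2)|∇u(x)|² + Q(u(x)). Then ΔP ≥ B + 2(2Q(u)+1)P ≥ 2|u|²P pointwise whenever P ≥ 0, where B = Σ_{i,j}|u_{x_i x_j}|². -/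
open scoped RealInnerProductSpace

set_option maxHeartbeats 1000000

section Aux
variable {n m : ℕ} {u : EuclideanSpace ℝ (Fin n) → EuclideanSpace ℝ (Fin m)}

/-- first derivative of `P` in direction `v` -/
private lemma claimA (hu : ContDiff ℝ 3 u) (y v : EuclideanSpace ℝ (Fin n)) :
    fderiv ℝ (fun y => (1 / 2) * ∑ j : Fin n, ‖fderiv ℝ u y (en n j)‖ ^ 2 +
          (‖u y‖ ^ 2 - 1) / 2) y v =
      (∑ j : Fin n, ⟪fderiv ℝ u y (en n j), fderiv ℝ (fderiv ℝ u) y v (en n j)⟫) +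
        ⟪u y, fderiv ℝ u y v⟫ := by
  have hu1 : Differentiable ℝ u := hu.differentiable (by norm_num)
  have hfc : ContDiff ℝ 2 (fderiv ℝ u) := hu.fderiv_right (by norm_num)
  have hf1 : ∀ z, HasFDerivAt (fderiv ℝ u) (fderiv ℝ (fderiv ℝ u) z) z :=
    fun z => ((hfc.differentiable (by norm_num)) z).hasFDerivAt
  have h1 : ∀ j : Fin n, HasFDerivAt (fun z => fderiv ℝ u z (en n j))
      ((ContinuousLinearMap.apply ℝ (EuclideanSpace ℝ (Fin m)) (en n j)).comp
        (fderiv ℝ (fderiv ℝ u) y)) y :=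
    fun j => (ContinuousLinearMap.apply ℝ (EuclideanSpace ℝ (Fin m)) (en n j)).hasFDerivAt.comp y (hf1 y)
  have h2 : HasFDerivAt (fun z => (‖u z‖ ^ 2 - 1) / 2)
      ((1/2 : ℝ) • ((2 : ℕ) • (innerSL ℝ (u y)).comp (fderiv ℝ u y))) y := by
    have : (fun z => (‖u z‖ ^ 2 - 1) / 2) = fun z => (1/2 : ℝ) * (‖u z‖ ^ 2 - 1) := by
      funext z; ring
    rw [this]
    exact (((hu1 y).hasFDerivAt.norm_sq).sub_const 1).const_mul _
  have hPd : HasFDerivAt (fun y => (1 / 2 : ℝ) * ∑ j : Fin n, ‖fderiv ℝ u y (en n j)‖ ^ 2 +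
      (‖u y‖ ^ 2 - 1) / 2)
      ((1/2 : ℝ) • (∑ j : Fin n, (2 : ℕ) • (innerSL ℝ (fderiv ℝ u y (en n j))).comp
          ((ContinuousLinearMap.apply ℝ (EuclideanSpace ℝ (Fin m)) (en n j)).comp
            (fderiv ℝ (fderiv ℝ u) y)))
        + (1/2 : ℝ) • ((2 : ℕ) • (innerSL ℝ (u y)).comp (fderiv ℝ u y))) y :=
    ((HasFDerivAt.fun_sum (fun j _ => (h1 j).norm_sq)).const_mul _).add h2
  rw [hPd.fderiv]
  simp only [ContinuousLinearMap.add_apply, ContinuousLinearMap.smul_apply,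
    ContinuousLinearMap.coe_sum', Finset.sum_apply, ContinuousLinearMap.comp_apply,
    innerSL_apply_apply, ContinuousLinearMap.apply_apply, smul_eq_mul, nsmul_eq_mul, Nat.cast_ofNat,
    Finset.mul_sum]
  rw [Finset.sum_congr rfl (fun j _ => by ring :
    ∀ j ∈ Finset.univ, (1/2 : ℝ) * (2 * ⟪fderiv ℝ u y (en n j), fderiv ℝ (fderiv ℝ u) y v (en n j)⟫) =
      ⟪fderiv ℝ u y (en n j), fderiv ℝ (fderiv ℝ u) y v (en n j)⟫)]
  ring

/-- second directional derivative of `P` -/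
private lemma claimI (hu : ContDiff ℝ 3 u) (x : EuclideanSpace ℝ (Fin n)) (i : Fin n) :
    iteratedFDeriv ℝ 2
        (fun y => (1 / 2) * ∑ j : Fin n, ‖fderiv ℝ u y (en n j)‖ ^ 2 +
          (‖u y‖ ^ 2 - 1) / 2) x ![en n i, en n i] =
      ∑ j : Fin n, (‖fderiv ℝ (fderiv ℝ u) x (en n i) (en n j)‖ ^ 2 +
          ⟪fderiv ℝ u x (en n j), fderiv ℝ (fderiv ℝ (fderiv ℝ u)) x (en n i) (en n i) (en n j)⟫) +
        (‖fderiv ℝ u x (en n i)‖ ^ 2 + ⟪u x, fderiv ℝ (fderiv ℝ u) x (en n i) (en n i)⟫) := by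
  have hu1 : Differentiable ℝ u := hu.differentiable (by norm_num)
  have hfc : ContDiff ℝ 2 (fderiv ℝ u) := hu.fderiv_right (by norm_num)
  have hF2c : ContDiff ℝ 1 (fderiv ℝ (fderiv ℝ u)) := hfc.fderiv_right (by norm_num)
  have hf1 : ∀ z, HasFDerivAt (fderiv ℝ u) (fderiv ℝ (fderiv ℝ u) z) z :=
    fun z => ((hfc.differentiable (by norm_num)) z).hasFDerivAt
  have hF21 : ∀ z, HasFDerivAt (fderiv ℝ (fderiv ℝ u)) (fderiv ℝ (fderiv ℝ (fderiv ℝ u)) z) z :=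
    fun z => ((hF2c.differentiable (by norm_num)) z).hasFDerivAt
  have hP2 : ContDiff ℝ 2 (fun y => (1 / 2) * ∑ j : Fin n, ‖fderiv ℝ u y (en n j)‖ ^ 2 +
      (‖u y‖ ^ 2 - 1) / 2) := by
    apply ContDiff.add
    · exact (contDiff_const.mul (ContDiff.sum fun j _ =>
        ContDiff.norm_sq (𝕜 := ℝ) ((ContinuousLinearMap.apply ℝ (EuclideanSpace ℝ (Fin m)) (en n j)).contDiff.comp hfc)))
    · exact ((ContDiff.norm_sq (𝕜 := ℝ) (hu.of_le (by norm_num))).sub contDiff_const).div_const 2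
  have hK : HasFDerivAt (fderiv ℝ (fun y => (1 / 2) * ∑ j : Fin n, ‖fderiv ℝ u y (en n j)‖ ^ 2 +
        (‖u y‖ ^ 2 - 1) / 2))
      (fderiv ℝ (fderiv ℝ (fun y => (1 / 2) * ∑ j : Fin n, ‖fderiv ℝ u y (en n j)‖ ^ 2 +
        (‖u y‖ ^ 2 - 1) / 2)) x) x :=
    (((hP2.fderiv_right (m := 1) (by norm_num)).differentiable (by norm_num)) x).hasFDerivAt
  rw [iteratedFDeriv_two_apply]
  simp only [Matrix.cons_val_zero, Matrix.cons_val_one, Matrix.head_cons]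
  have e2 : fderiv ℝ (fun y => fderiv ℝ (fun y => (1 / 2) * ∑ j : Fin n, ‖fderiv ℝ u y (en n j)‖ ^ 2 +
        (‖u y‖ ^ 2 - 1) / 2) y (en n i)) x (en n i)
      = fderiv ℝ (fderiv ℝ (fun y => (1 / 2) * ∑ j : Fin n, ‖fderiv ℝ u y (en n j)‖ ^ 2 +
        (‖u y‖ ^ 2 - 1) / 2)) x (en n i) (en n i) := by
    have hcomp := ((ContinuousLinearMap.apply ℝ ℝ (en n i)).hasFDerivAt.comp x hK).fderiv
    rw [show (fun y => fderiv ℝ (fun y => (1 / 2) * ∑ j : Fin n, ‖fderiv ℝ u y (en n j)‖ ^ 2 +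
        (‖u y‖ ^ 2 - 1) / 2) y (en n i)) = (⇑(ContinuousLinearMap.apply ℝ ℝ (en n i)) ∘
        fderiv ℝ (fun y => (1 / 2) * ∑ j : Fin n, ‖fderiv ℝ u y (en n j)‖ ^ 2 +
        (‖u y‖ ^ 2 - 1) / 2)) from rfl, hcomp]
    rfl
  rw [← e2]
  have e3 : (fun y => fderiv ℝ (fun y => (1 / 2) * ∑ j : Fin n, ‖fderiv ℝ u y (en n j)‖ ^ 2 +
        (‖u y‖ ^ 2 - 1) / 2) y (en n i))
      = fun y => (∑ j : Fin n, ⟪fderiv ℝ u y (en n j), fderiv ℝ (fderiv ℝ u) y (en n i) (en n j)⟫) +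
        ⟪u y, fderiv ℝ u y (en n i)⟫ := funext fun y => claimA hu y (en n i)
  rw [e3]
  have hfj : ∀ j : Fin n, HasFDerivAt (fun z => fderiv ℝ u z (en n j))
      ((ContinuousLinearMap.apply ℝ (EuclideanSpace ℝ (Fin m)) (en n j)).comp
        (fderiv ℝ (fderiv ℝ u) x)) x :=
    fun j => (ContinuousLinearMap.apply ℝ (EuclideanSpace ℝ (Fin m)) (en n j)).hasFDerivAt.comp x (hf1 x)
  have hFij : ∀ j : Fin n, HasFDerivAt (fun z => fderiv ℝ (fderiv ℝ u) z (en n i) (en n j))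
      ((ContinuousLinearMap.apply ℝ (EuclideanSpace ℝ (Fin m)) (en n j)).comp
        ((ContinuousLinearMap.apply ℝ (EuclideanSpace ℝ (Fin n) →L[ℝ] EuclideanSpace ℝ (Fin m)) (en n i)).comp
          (fderiv ℝ (fderiv ℝ (fderiv ℝ u)) x))) x :=
    fun j => by
      have step1 : HasFDerivAt (fun z => fderiv ℝ (fderiv ℝ u) z (en n i))
          ((ContinuousLinearMap.apply ℝ (EuclideanSpace ℝ (Fin n) →L[ℝ] EuclideanSpace ℝ (Fin m)) (en n i)).comp
            (fderiv ℝ (fderiv ℝ (fderiv ℝ u)) x)) x :=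
        by
          have step0 := HasFDerivAt.comp (g := ⇑(ContinuousLinearMap.apply ℝ (EuclideanSpace ℝ (Fin n) →L[ℝ] EuclideanSpace ℝ (Fin m)) (en n i))) x (ContinuousLinearMap.hasFDerivAt _) (hF21 x)
          exact step0
      exact (ContinuousLinearMap.apply ℝ (EuclideanSpace ℝ (Fin m)) (en n j)).hasFDerivAt.comp x step1
  have hg := (HasFDerivAt.fun_sum (fun j (_ : j ∈ Finset.univ) => (hfj j).inner ℝ (hFij j))).fun_add
    (((hu1 x).hasFDerivAt.inner ℝ (hfj i)))
  rw [hg.fderiv]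
  simp only [ContinuousLinearMap.add_apply, ContinuousLinearMap.coe_sum', Finset.sum_apply,
    ContinuousLinearMap.comp_apply, ContinuousLinearMap.prod_apply, fderivInnerCLM_apply,
    ContinuousLinearMap.apply_apply, real_inner_self_eq_norm_sq]
  congr 1
  · exact Finset.sum_congr rfl fun j _ => add_comm _ _
  · exact add_comm _ _

/-- derivative of `y ↦ D²u(y) b c` -/
private lemma hlam (hu : ContDiff ℝ 3 u) (x : EuclideanSpace ℝ (Fin n))
    (b c : EuclideanSpace ℝ (Fin n)) :
    HasFDerivAt (fun z => fderiv ℝ (fderiv ℝ u) z b c)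
      ((ContinuousLinearMap.apply ℝ (EuclideanSpace ℝ (Fin m)) c).comp
        ((ContinuousLinearMap.apply ℝ (EuclideanSpace ℝ (Fin n) →L[ℝ] EuclideanSpace ℝ (Fin m)) b).comp
          (fderiv ℝ (fderiv ℝ (fderiv ℝ u)) x))) x := by
  have hfc : ContDiff ℝ 2 (fderiv ℝ u) := hu.fderiv_right (by norm_num)
  have hF2c : ContDiff ℝ 1 (fderiv ℝ (fderiv ℝ u)) := hfc.fderiv_right (by norm_num)
  have hF21 : HasFDerivAt (fderiv ℝ (fderiv ℝ u)) (fderiv ℝ (fderiv ℝ (fderiv ℝ u)) x) x :=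
    ((hF2c.differentiable (by norm_num)) x).hasFDerivAt
  have step0 := HasFDerivAt.comp (g := ⇑(ContinuousLinearMap.apply ℝ (EuclideanSpace ℝ (Fin n) →L[ℝ] EuclideanSpace ℝ (Fin m)) b)) x (ContinuousLinearMap.hasFDerivAt _) hF21
  have step1 : HasFDerivAt (fun z => fderiv ℝ (fderiv ℝ u) z b)
      ((ContinuousLinearMap.apply ℝ (EuclideanSpace ℝ (Fin n) →L[ℝ] EuclideanSpace ℝ (Fin m)) b).comp
        (fderiv ℝ (fderiv ℝ (fderiv ℝ u)) x)) x := step0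
  exact (ContinuousLinearMap.apply ℝ (EuclideanSpace ℝ (Fin m)) c).hasFDerivAt.comp x step1

/-- full symmetry of the third derivative in the needed pattern -/
private lemma sym3 (hu : ContDiff ℝ 3 u) (x : EuclideanSpace ℝ (Fin n))
    (a b : EuclideanSpace ℝ (Fin n)) :
    fderiv ℝ (fderiv ℝ (fderiv ℝ u)) x a a b =
      fderiv ℝ (fderiv ℝ (fderiv ℝ u)) x b a a := by
  have hfc : ContDiff ℝ 2 (fderiv ℝ u) := hu.fderiv_right (by norm_num)
  have s12 : ∀ v w, fderiv ℝ (fderiv ℝ (fderiv ℝ u)) x v w =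
      fderiv ℝ (fderiv ℝ (fderiv ℝ u)) x w v :=
    hfc.contDiffAt.isSymmSndFDerivAt (by norm_num)
  have s23 : ∀ (p q r : EuclideanSpace ℝ (Fin n)),
      fderiv ℝ (fderiv ℝ (fderiv ℝ u)) x p q r =
        fderiv ℝ (fderiv ℝ (fderiv ℝ u)) x p r q := by
    intro p q r
    have hsy : (fun z => fderiv ℝ (fderiv ℝ u) z q r) =
        (fun z => fderiv ℝ (fderiv ℝ u) z r q) :=
      funext fun y => (hu.contDiffAt.isSymmSndFDerivAt (by norm_num)) q r
    calc fderiv ℝ (fderiv ℝ (fderiv ℝ u)) x p q r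
        = fderiv ℝ (fun z => fderiv ℝ (fderiv ℝ u) z q r) x p := by
          rw [(hlam hu x q r).fderiv]; rfl
      _ = fderiv ℝ (fun z => fderiv ℝ (fderiv ℝ u) z r q) x p := by rw [hsy]
      _ = fderiv ℝ (fderiv ℝ (fderiv ℝ u)) x p r q := by
          rw [(hlam hu x r q).fderiv]; rfl
  rw [s23 a a b, s12 a b]

/-- derivative of the PDE -/
private lemma lapDeriv (hu : ContDiff ℝ 3 u)
    (hsol : ∀ x, ∑ i : Fin n, iteratedFDeriv ℝ 2 u x ![en n i, en n i] =
      (‖u x‖ ^ 2 - 1) • u x) (x : EuclideanSpace ℝ (Fin n)) (j : Fin n) :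
    ∑ i : Fin n, fderiv ℝ (fderiv ℝ (fderiv ℝ u)) x (en n j) (en n i) (en n i) =
      (‖u x‖ ^ 2 - 1) • fderiv ℝ u x (en n j) +
        (2 * ⟪u x, fderiv ℝ u x (en n j)⟫) • u x := by
  have hu1 : Differentiable ℝ u := hu.differentiable (by norm_num)
  have hV : HasFDerivAt (fun y => ∑ i : Fin n, fderiv ℝ (fderiv ℝ u) y (en n i) (en n i))
      (∑ i : Fin n, (ContinuousLinearMap.apply ℝ (EuclideanSpace ℝ (Fin m)) (en n i)).comp
        ((ContinuousLinearMap.apply ℝ (EuclideanSpace ℝ (Fin n) →L[ℝ] EuclideanSpace ℝ (Fin m)) (en n i)).comp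
          (fderiv ℝ (fderiv ℝ (fderiv ℝ u)) x))) x :=
    HasFDerivAt.fun_sum (fun i _ => hlam hu x (en n i) (en n i))
  have hW : HasFDerivAt (fun y => (‖u y‖ ^ 2 - 1) • u y)
      ((‖u x‖ ^ 2 - 1) • fderiv ℝ u x +
        ((2 : ℕ) • (innerSL ℝ (u x)).comp (fderiv ℝ u x)).smulRight (u x)) x :=
    (((hu1 x).hasFDerivAt.norm_sq).sub_const 1).smul (hu1 x).hasFDerivAt
  have hfun : (fun y => ∑ i : Fin n, fderiv ℝ (fderiv ℝ u) y (en n i) (en n i)) =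
      (fun y => (‖u y‖ ^ 2 - 1) • u y) := by
    funext y
    rw [← hsol y]
    refine Finset.sum_congr rfl fun i _ => ?_
    rw [iteratedFDeriv_two_apply]
    simp
  have heq : (∑ i : Fin n, (ContinuousLinearMap.apply ℝ (EuclideanSpace ℝ (Fin m)) (en n i)).comp
        ((ContinuousLinearMap.apply ℝ (EuclideanSpace ℝ (Fin n) →L[ℝ] EuclideanSpace ℝ (Fin m)) (en n i)).comp
          (fderiv ℝ (fderiv ℝ (fderiv ℝ u)) x))) =
      ((‖u x‖ ^ 2 - 1) • fderiv ℝ u x +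
        ((2 : ℕ) • (innerSL ℝ (u x)).comp (fderiv ℝ u x)).smulRight (u x)) := by
    rw [← hV.fderiv, ← hW.fderiv, hfun]
  have := congrFun (congrArg (fun (L : EuclideanSpace ℝ (Fin n) →L[ℝ] EuclideanSpace ℝ (Fin m)) =>
    (L : EuclideanSpace ℝ (Fin n) → EuclideanSpace ℝ (Fin m))) heq) (en n j)
  simpa [ContinuousLinearMap.smulRight_apply, ContinuousLinearMap.smul_apply,
    nsmul_eq_mul] using this

end Aux

/-- Let `u ∈ C³(ℝⁿ, ℝ^m)` solve the Ginzburg–Landau system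
`Δu = (|u|² − 1)u`, and set `Q(u) = (|u|²−1)/2`, `P(x) = (1/2)|∇u(x)|² + Q(u(x))`.
Then `ΔP ≥ B + 2(2Q(u)+1)P ≥ 2|u|²P` pointwise whenever `P ≥ 0`,
where `B = Σ_{i,j}|u_{x_i x_j}|²`. -/
theorem GL_P_function_inequality (n m : ℕ)
    (u : EuclideanSpace ℝ (Fin n) → EuclideanSpace ℝ (Fin m)) (hu : ContDiff ℝ 3 u)
    (hsol : ∀ x, ∑ i : Fin n, iteratedFDeriv ℝ 2 u x ![en n i, en n i] =
      (‖u x‖ ^ 2 - 1) • u x) :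
    ∀ x : EuclideanSpace ℝ (Fin n),
      0 ≤ (1 / 2) * ∑ j : Fin n, ‖fderiv ℝ u x (en n j)‖ ^ 2 + (‖u x‖ ^ 2 - 1) / 2 →
      (∑ i : Fin n, iteratedFDeriv ℝ 2
          (fun y => (1 / 2) * ∑ j : Fin n, ‖fderiv ℝ u y (en n j)‖ ^ 2 +
            (‖u y‖ ^ 2 - 1) / 2) x ![en n i, en n i] ≥
        (∑ i : Fin n, ∑ j : Fin n, ‖iteratedFDeriv ℝ 2 u x ![en n i, en n j]‖ ^ 2) +
          2 * (2 * ((‖u x‖ ^ 2 - 1) / 2) + 1) *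
            ((1 / 2) * ∑ j : Fin n, ‖fderiv ℝ u x (en n j)‖ ^ 2 + (‖u x‖ ^ 2 - 1) / 2)) ∧
      ((∑ i : Fin n, ∑ j : Fin n, ‖iteratedFDeriv ℝ 2 u x ![en n i, en n j]‖ ^ 2) +
          2 * (2 * ((‖u x‖ ^ 2 - 1) / 2) + 1) *
            ((1 / 2) * ∑ j : Fin n, ‖fderiv ℝ u x (en n j)‖ ^ 2 + (‖u x‖ ^ 2 - 1) / 2) ≥
        2 * ‖u x‖ ^ 2 *
          ((1 / 2) * ∑ j : Fin n, ‖fderiv ℝ u x (en n j)‖ ^ 2 + (‖u x‖ ^ 2 - 1) / 2)) := by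
  intro x _
  have hBrw : (∑ i : Fin n, ∑ j : Fin n, ‖iteratedFDeriv ℝ 2 u x ![en n i, en n j]‖ ^ 2) =
      ∑ i : Fin n, ∑ j : Fin n, ‖fderiv ℝ (fderiv ℝ u) x (en n i) (en n j)‖ ^ 2 := by
    refine Finset.sum_congr rfl fun i _ => Finset.sum_congr rfl fun j _ => ?_
    rw [iteratedFDeriv_two_apply]
    simp
  have hB : (0 : ℝ) ≤ ∑ i : Fin n, ∑ j : Fin n, ‖iteratedFDeriv ℝ 2 u x ![en n i, en n j]‖ ^ 2 :=
    Finset.sum_nonneg fun i _ => Finset.sum_nonneg fun j _ => by positivity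
  have hT : (0 : ℝ) ≤ ∑ j : Fin n, ⟪u x, fderiv ℝ u x (en n j)⟫ ^ 2 :=
    Finset.sum_nonneg fun j _ => by positivity
  -- the Laplacian of P
  have key : ∑ i : Fin n, iteratedFDeriv ℝ 2
        (fun y => (1 / 2) * ∑ j : Fin n, ‖fderiv ℝ u y (en n j)‖ ^ 2 +
          (‖u y‖ ^ 2 - 1) / 2) x ![en n i, en n i] =
      (∑ i : Fin n, ∑ j : Fin n, ‖iteratedFDeriv ℝ 2 u x ![en n i, en n j]‖ ^ 2) +
        ((‖u x‖ ^ 2 - 1) * ∑ j : Fin n, ‖fderiv ℝ u x (en n j)‖ ^ 2 +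
          2 * ∑ j : Fin n, ⟪u x, fderiv ℝ u x (en n j)⟫ ^ 2) +
        (∑ j : Fin n, ‖fderiv ℝ u x (en n j)‖ ^ 2) +
        (‖u x‖ ^ 2 - 1) * ‖u x‖ ^ 2 := by
    rw [Finset.sum_congr rfl (fun i _ => claimI hu x i)]
    have h2 : ∑ i : Fin n, ∑ j : Fin n,
        ⟪fderiv ℝ u x (en n j), fderiv ℝ (fderiv ℝ (fderiv ℝ u)) x (en n i) (en n i) (en n j)⟫ =
        (‖u x‖ ^ 2 - 1) * ∑ j : Fin n, ‖fderiv ℝ u x (en n j)‖ ^ 2 +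
          2 * ∑ j : Fin n, ⟪u x, fderiv ℝ u x (en n j)⟫ ^ 2 := by
      rw [Finset.sum_comm]
      have : ∀ j : Fin n, ∑ i : Fin n,
          ⟪fderiv ℝ u x (en n j), fderiv ℝ (fderiv ℝ (fderiv ℝ u)) x (en n i) (en n i) (en n j)⟫ =
          (‖u x‖ ^ 2 - 1) * ‖fderiv ℝ u x (en n j)‖ ^ 2 +
            2 * ⟪u x, fderiv ℝ u x (en n j)⟫ ^ 2 := by
        intro j
        have hs : ∑ i : Fin n,
            ⟪fderiv ℝ u x (en n j), fderiv ℝ (fderiv ℝ (fderiv ℝ u)) x (en n i) (en n i) (en n j)⟫ =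
            ⟪fderiv ℝ u x (en n j), ∑ i : Fin n,
              fderiv ℝ (fderiv ℝ (fderiv ℝ u)) x (en n j) (en n i) (en n i)⟫ := by
          rw [inner_sum]
          exact Finset.sum_congr rfl fun i _ => by rw [sym3 hu x (en n i) (en n j)]
        rw [hs, lapDeriv hu hsol x j, inner_add_right, real_inner_smul_right,
          real_inner_smul_right, real_inner_self_eq_norm_sq, real_inner_comm]
        ring
      rw [Finset.sum_congr rfl fun j _ => this j, Finset.sum_add_distrib,
        ← Finset.mul_sum, ← Finset.mul_sum]
    have h3 : ∑ i : Fin n, ⟪u x, fderiv ℝ (fderiv ℝ u) x (en n i) (en n i)⟫ =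
        (‖u x‖ ^ 2 - 1) * ‖u x‖ ^ 2 := by
      rw [← inner_sum]
      have : ∑ i : Fin n, fderiv ℝ (fderiv ℝ u) x (en n i) (en n i) =
          (‖u x‖ ^ 2 - 1) • u x := by
        rw [← hsol x]
        refine Finset.sum_congr rfl fun i _ => ?_
        rw [iteratedFDeriv_two_apply]
        simp
      rw [this, real_inner_smul_right, real_inner_self_eq_norm_sq]
    simp only [Finset.sum_add_distrib]
    rw [h2, h3, hBrw]
    ring
  constructor
  · rw [key]
    nlinarith [hT]
  · nlinarith [hB]
end
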